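/- arXiv:math/0611791 — 5 statements merged into one kernel-verified Lean document; each statement's English description precedes it below -/
import Mathlib

section
/- Let r be a positive integer, a_1,…,a_r and b_1,…,b_r positive integers, q ∈ ℂ with 0 < |q| < 1, x ∈ ℝ with x ≥ 0, and let k be a positive odd integer. Then the k-th iterated derivative at t = 0 of the function t ↦ 2^r e^{xt} / ∏_{j=1}^r (q^{b_j} e^{a_j t} + 1) equals 2^r Σ_{n_1,…,n_r=0}^∞ (-1)^{n_1+⋯+n_r} q^{b_1 n_1+⋯+b_r n_r} (a_1 n_1+⋯+a_r n_r + x)^k, where the sum runs over all tuples (n_1,…,n_r) ∈ ℕ^r and converges absolutely. -/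
open scoped Topology

set_option maxHeartbeats 1000000




lemma aux_summable_pi_prod {r : ℕ} {g : Fin r → ℕ → ℝ} (h0 : ∀ j m, 0 ≤ g j m)
    (hs : ∀ j, Summable (g j)) :
    Summable (fun n : Fin r → ℕ => ∏ j, g j (n j)) := by
  induction r with
  | zero => exact .of_finite
  | succ r ih =>
    have h2 : Summable (fun n : Fin r → ℕ => ∏ j : Fin r, g j.succ (n j)) :=
      ih (g := fun j => g j.succ) (fun j m => h0 _ _) (fun j => hs _)
    have hle1 : (0 : ℕ → ℝ) ≤ g 0 := Pi.le_def.mpr fun m => h0 0 m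
    have hle2 : (0 : (Fin r → ℕ) → ℝ) ≤ fun n : Fin r → ℕ => ∏ j : Fin r, g j.succ (n j) :=
      Pi.le_def.mpr fun n => Finset.prod_nonneg fun j _ => h0 _ _
    have h3 : Summable (fun p : ℕ × (Fin r → ℕ) => g 0 p.1 * ∏ j : Fin r, g j.succ (p.2 j)) :=
      Summable.mul_of_nonneg (f := g 0)
        (g := fun n : Fin r → ℕ => ∏ j : Fin r, g j.succ (n j)) (hs 0) h2 hle1 hle2
    rw [← (Fin.consEquiv (fun _ : Fin (r+1) => ℕ)).summable_iff]
    convert h3 using 1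
    funext p
    simp [Fin.consEquiv, Fin.prod_univ_succ]

lemma aux_hasSum_pi_prod {r : ℕ} {f : Fin r → ℕ → ℂ} {S : Fin r → ℂ}
    (hf : ∀ j, HasSum (f j) (S j)) (hn : ∀ j, Summable fun m => ‖f j m‖) :
    HasSum (fun n : Fin r → ℕ => ∏ j, f j (n j)) (∏ j, S j) := by
  induction r with
  | zero => simpa using hasSum_fintype (fun _ : Fin 0 → ℕ => (1 : ℂ))
  | succ r ih =>
    have h2 : HasSum (fun n : Fin r → ℕ => ∏ j : Fin r, f j.succ (n j))
        (∏ j : Fin r, S j.succ) :=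
      ih (f := fun j => f j.succ) (S := fun j => S j.succ) (fun j => hf _) (fun j => hn _)
    have hnorm : Summable (fun p : ℕ × (Fin r → ℕ) =>
        f 0 p.1 * ∏ j : Fin r, f j.succ (p.2 j)) := by
      have h4 : Summable (fun p : ℕ × (Fin r → ℕ) =>
          ‖f 0 p.1‖ * ∏ j : Fin r, ‖f j.succ (p.2 j)‖) :=
        Summable.mul_of_nonneg (f := fun m => ‖f 0 m‖)
          (g := fun n : Fin r → ℕ => ∏ j : Fin r, ‖f j.succ (n j)‖) (hn 0)
          (aux_summable_pi_prod (g := fun j m => ‖f j.succ m‖) (fun j m => norm_nonneg _)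
            (fun j => hn _))
          (Pi.le_def.mpr fun m => norm_nonneg _)
          (Pi.le_def.mpr fun n => Finset.prod_nonneg fun j _ => norm_nonneg _)
      apply Summable.of_norm
      apply h4.of_nonneg_of_le (fun _ => norm_nonneg _)
      intro p
      rw [norm_mul, norm_prod]
    have h3 := HasSum.mul (f := f 0)
      (g := fun n : Fin r → ℕ => ∏ j : Fin r, f j.succ (n j)) (hf 0) h2 hnorm
    rw [← (Fin.consEquiv (fun _ : Fin (r+1) => ℕ)).hasSum_iff, Fin.prod_univ_succ]
    convert h3 using 1
    · rfl
    funext p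
    simp [Fin.consEquiv, Fin.prod_univ_succ]

lemma aux_one_add_sum_le_prod {ι : Type*} (s : Finset ι) (v : ι → ℝ) (hv : ∀ j, 0 ≤ v j) :
    1 + ∑ j ∈ s, v j ≤ ∏ j ∈ s, (1 + v j) := by
  classical
  induction s using Finset.induction_on with
  | empty => simp
  | insert c s' hns ih =>
    rw [Finset.sum_insert hns, Finset.prod_insert hns]
    have h1 : (0:ℝ) ≤ ∑ j ∈ s', v j := Finset.sum_nonneg fun j _ => hv j
    nlinarith [hv c, ih]

lemma aux_pow_succ_le (m n : ℕ) : ((n : ℝ) + 1) ^ m ≤ 2 ^ m * ((n : ℝ) ^ m + 1) := by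
  rcases Nat.eq_zero_or_pos n with h | h
  · subst h
    have h1 : (1:ℝ) ≤ 2 ^ m := one_le_pow₀ one_le_two
    have h2 : (0:ℝ) ≤ (0:ℝ) ^ m := by positivity
    simp only [Nat.cast_zero, zero_add, one_pow]
    nlinarith
  · have h1 : ((n:ℝ) + 1) ≤ 2 * n := by
      have : (1:ℝ) ≤ n := by exact_mod_cast h
      linarith
    calc ((n:ℝ)+1)^m ≤ (2*n)^m := pow_le_pow_left₀ (by positivity) h1 m
    _ = 2^m * (n:ℝ)^m := mul_pow _ _ _
    _ ≤ 2^m * ((n:ℝ)^m + 1) := by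
        have : (0:ℝ) ≤ 2^m := by positivity
        nlinarith

lemma aux_summable_poly_geom (m : ℕ) (a : ℝ) (ha : 0 ≤ a) {s : ℝ} (hs0 : 0 ≤ s) (hs1 : s < 1) :
    Summable fun n : ℕ => (a * n + 1) ^ m * s ^ n := by
  have hgeom : Summable fun n : ℕ => s ^ n := summable_geometric_of_lt_one hs0 hs1
  have hpow : Summable fun n : ℕ => (n : ℝ) ^ m * s ^ n := by
    have := summable_pow_mul_geometric_of_norm_lt_one (R := ℝ) m
      (r := s) (by rwa [Real.norm_eq_abs, abs_of_nonneg hs0])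
    simpa using this
  have hbig : Summable fun n : ℕ =>
      ((a+1)*2)^m * ((n:ℝ)^m * s^n + s^n) := ((hpow.add hgeom).mul_left _)
  apply hbig.of_nonneg_of_le (fun n => by positivity)
  intro n
  have h1 : a * n + 1 ≤ (a+1) * ((n:ℝ)+1) := by nlinarith [Nat.cast_nonneg (α := ℝ) n]
  have h2 : (a*n+1)^m ≤ ((a+1)*((n:ℝ)+1))^m := pow_le_pow_left₀ (by positivity) h1 m
  have h3 : ((a+1)*((n:ℝ)+1))^m = (a+1)^m * ((n:ℝ)+1)^m := mul_pow _ _ _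
  have h4 := aux_pow_succ_le m n
  have hsn : (0:ℝ) ≤ s^n := by positivity
  have h5 : (a*n+1)^m ≤ (a+1)^m * (2^m * ((n:ℝ)^m + 1)) := by
    calc (a*n+1)^m ≤ (a+1)^m * ((n:ℝ)+1)^m := by rw [← h3]; exact h2
    _ ≤ (a+1)^m * (2^m * ((n:ℝ)^m + 1)) := by
        have : (0:ℝ) ≤ (a+1)^m := by positivity
        nlinarith
  calc (a*n+1)^m * s^n ≤ ((a+1)^m * (2^m * ((n:ℝ)^m + 1))) * s^n := by
        apply mul_le_mul_of_nonneg_right h5 hsn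
  _ = ((a+1)*2)^m * ((n:ℝ)^m * s^n + s^n) := by rw [mul_pow]; ring



lemma aux_core {ι : Type*} {R : ℝ} (c : ι → ℂ) (lam : ι → ℝ)
    (u : ℕ → ι → ℝ) (hu : ∀ m, Summable (u m))
    (hbound : ∀ (m : ℕ) (n : ι) (t : ℂ), t ∈ Metric.ball (0:ℂ) R →
      ‖c n * (lam n : ℂ) ^ m * Complex.exp ((lam n : ℂ) * t)‖ ≤ u m n)
    (F : ℂ → ℂ)
    (hF : ∀ t ∈ Metric.ball (0:ℂ) R, F t = ∑' n, c n * Complex.exp ((lam n : ℂ) * t)) :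
    ∀ (m : ℕ), ∀ t ∈ Metric.ball (0:ℂ) R,
      iteratedDeriv m F t = ∑' n, c n * (lam n : ℂ) ^ m * Complex.exp ((lam n : ℂ) * t) := by
  have hUopen : IsOpen (Metric.ball (0:ℂ) R) := Metric.isOpen_ball
  intro m
  induction m with
  | zero =>
    intro t ht
    rw [iteratedDeriv_zero, hF t ht]
    exact tsum_congr fun n => by rw [pow_zero, mul_one]
  | succ m ih =>
    intro t ht
    rw [iteratedDeriv_succ]
    have heq : iteratedDeriv m F =ᶠ[𝓝 t]
        (fun w => ∑' n, c n * (lam n : ℂ) ^ m * Complex.exp ((lam n : ℂ) * w)) := by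
      filter_upwards [hUopen.mem_nhds ht] with w hw
      exact ih w hw
    rw [heq.deriv_eq]
    have hd : ∀ (n : ι) (w : ℂ), HasDerivAt
        (fun z => c n * (lam n : ℂ) ^ m * Complex.exp ((lam n : ℂ) * z))
        (c n * (lam n : ℂ) ^ (m+1) * Complex.exp ((lam n : ℂ) * w)) w := by
      intro n w
      have h1 : HasDerivAt (fun z : ℂ => (lam n : ℂ) * z) ((lam n : ℂ) * 1) w :=
        (hasDerivAt_id w).const_mul _
      have h2 := (h1.cexp).const_mul (c n * (lam n : ℂ) ^ m)
      refine h2.congr_deriv ?_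
      ring
    have hds := Complex.hasSum_deriv_of_summable_norm
      (F := fun n => fun z => c n * (lam n : ℂ) ^ m * Complex.exp ((lam n : ℂ) * z))
      (u := u m) (hu m)
      (fun n => Differentiable.differentiableOn (fun w => (hd n w).differentiableAt))
      hUopen (fun n w hw => hbound m n w hw) ht
    rw [← hds.tsum_eq]
    exact tsum_congr fun n => (hd n t).deriv

lemma aux_bound {r : ℕ} (a b : Fin r → ℕ) (q : ℂ) (x R : ℝ) (hx : 0 ≤ x)
    (m : ℕ) (n : Fin r → ℕ) (t : ℂ) (ht : t ∈ Metric.ball (0:ℂ) R) :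
    ‖((2:ℂ)^r * (-1)^(∑ j, n j) * q^(∑ j, b j * n j)) *
        ((((∑ j, (a j : ℝ) * n j) + x : ℝ)) : ℂ)^m *
        Complex.exp ((((∑ j, (a j : ℝ) * n j) + x : ℝ) : ℂ) * t)‖ ≤
      (2^r * (x+1)^m * Real.exp (x*R)) *
        ∏ j, (((a j : ℝ) * n j + 1)^m *
          (‖q‖^(b j) * Real.exp ((a j : ℝ) * R))^(n j)) := by
  set ρ := ‖q‖ with hρ
  have hρ0 : 0 ≤ ρ := norm_nonneg q
  set S := ∑ j, (a j : ℝ) * n j with hS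
  have hS0 : 0 ≤ S := Finset.sum_nonneg fun j _ => by positivity
  set L := S + x with hLdef
  have hL0 : 0 ≤ L := by positivity
  have htre : t.re < R := by
    have h1 : ‖t‖ < R := by
      simpa [Complex.dist_eq] using Metric.mem_ball.mp ht
    exact lt_of_le_of_lt (Complex.re_le_norm t) h1
  have h1 : ‖(2:ℂ)^r * (-1)^(∑ j, n j) * q^(∑ j, b j * n j)‖ = 2^r * ρ^(∑ j, b j * n j) := by
    simp [map_mul, map_pow, hρ]
  have h2 : ‖((L : ℝ) : ℂ)^m‖ = L^m := by
    rw [norm_pow, Complex.norm_real, Real.norm_eq_abs, abs_of_nonneg hL0]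
  have h3 : ‖Complex.exp ((L:ℂ) * t)‖ = Real.exp (L * t.re) := by
    rw [Complex.norm_exp]
    congr 1
    simp [Complex.mul_re]
  calc ‖((2:ℂ)^r * (-1)^(∑ j, n j) * q^(∑ j, b j * n j)) * ((L:ℝ):ℂ)^m *
        Complex.exp ((L:ℂ) * t)‖
      = (2^r * ρ^(∑ j, b j * n j)) * L^m * Real.exp (L * t.re) := by
        rw [norm_mul, norm_mul, h1, h2, h3]
    _ ≤ (2^r * ρ^(∑ j, b j * n j)) * L^m * Real.exp (L * R) := by
        refine mul_le_mul_of_nonneg_left (Real.exp_le_exp.2 ?_) (by positivity)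
        exact mul_le_mul_of_nonneg_left htre.le hL0
    _ ≤ (2^r * ρ^(∑ j, b j * n j)) *
          ((x+1)^m * ∏ j, ((a j : ℝ) * n j + 1)^m) * Real.exp (L * R) := by
        refine mul_le_mul_of_nonneg_right
          (mul_le_mul_of_nonneg_left ?_ (by positivity)) (Real.exp_nonneg _)
        have hsum := aux_one_add_sum_le_prod Finset.univ (fun j => (a j : ℝ) * n j)
          (fun j => by positivity)
        have hP0 : (0:ℝ) ≤ ∏ j, (1 + (a j : ℝ) * n j) :=
          Finset.prod_nonneg fun j _ => by positivity
        have hL : L ≤ (x+1) * ∏ j, (1 + (a j : ℝ) * n j) := by nlinarith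
        calc L^m ≤ ((x+1) * ∏ j, (1 + (a j : ℝ) * n j))^m := pow_le_pow_left₀ hL0 hL m
          _ = (x+1)^m * ∏ j, (1 + (a j : ℝ) * n j)^m := by
              rw [mul_pow, ← Finset.prod_pow]
          _ = (x+1)^m * ∏ j, ((a j : ℝ) * n j + 1)^m := by
              rw [Finset.prod_congr rfl fun j _ => by rw [add_comm]]
    _ = (2^r * (x+1)^m * Real.exp (x*R)) *
          ∏ j, (((a j : ℝ) * n j + 1)^m * (ρ^(b j) * Real.exp ((a j : ℝ) * R))^(n j)) := by
        have e1 : ρ^(∑ j, b j * n j) = ∏ j, (ρ^(b j))^(n j) := by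
          rw [← Finset.prod_pow_eq_pow_sum]
          exact Finset.prod_congr rfl fun j _ => by rw [← pow_mul]
        have e2 : Real.exp (L * R) = Real.exp (x*R) * ∏ j, (Real.exp ((a j : ℝ) * R))^(n j) := by
          have : L * R = x * R + ∑ j, (n j : ℝ) * ((a j : ℝ) * R) := by
            rw [hLdef, hS, add_mul, Finset.sum_mul, add_comm]
            congr 1
            exact Finset.sum_congr rfl fun j _ => by ring
          rw [this, Real.exp_add, Real.exp_sum]
          congr 1
          exact Finset.prod_congr rfl fun j _ => by rw [Real.exp_nat_mul]
        rw [e1, e2]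
        simp only [mul_pow, Finset.prod_mul_distrib]
        ring


lemma aux_expansion {r : ℕ} (a b : Fin r → ℕ) (q : ℂ) (x : ℝ) (t : ℂ)
    (hw : ∀ j, ‖q‖ ^ (b j) * Real.exp ((a j : ℝ) * t.re) < 1) :
    HasSum (fun n : Fin r → ℕ =>
      ((2:ℂ)^r * (-1)^(∑ j, n j) * q^(∑ j, b j * n j)) *
        Complex.exp ((((∑ j, (a j : ℝ) * n j) + x : ℝ) : ℂ) * t))
      ((2:ℂ)^r * Complex.exp ((x:ℂ) * t) / ∏ j, (q^(b j) * Complex.exp ((a j : ℂ) * t) + 1)) := by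
  set w : Fin r → ℂ := fun j => q^(b j) * Complex.exp ((a j : ℂ) * t) with hwdef
  have hwn : ∀ j, ‖w j‖ < 1 := by
    intro j
    rw [hwdef]
    simp only [norm_mul, norm_pow, Complex.norm_exp]
    have : ((a j : ℂ) * t).re = (a j : ℝ) * t.re := by simp [Complex.mul_re]
    rw [this]
    exact hw j
  have hgeo : ∀ j, HasSum (fun m : ℕ => (-(w j))^m) ((w j + 1)⁻¹) := by
    intro j
    have h := hasSum_geometric_of_norm_lt_one (ξ := -(w j)) (by rw [norm_neg]; exact hwn j)
    simpa [sub_neg_eq_add, add_comm] using h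
  have hnrm : ∀ j, Summable fun m : ℕ => ‖(-(w j))^m‖ := by
    intro j
    simp only [norm_pow, norm_neg]
    exact summable_geometric_of_lt_one (norm_nonneg _) (hwn j)
  have hPi := aux_hasSum_pi_prod hgeo hnrm
  have hMul := hPi.mul_left ((2:ℂ)^r * Complex.exp ((x:ℂ)*t))
  have hfun : (fun n : Fin r → ℕ =>
      ((2:ℂ)^r * Complex.exp ((x:ℂ)*t)) * ∏ j, (-(w j))^(n j)) =
      (fun n : Fin r → ℕ =>
      ((2:ℂ)^r * (-1)^(∑ j, n j) * q^(∑ j, b j * n j)) *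
        Complex.exp ((((∑ j, (a j : ℝ) * n j) + x : ℝ) : ℂ) * t)) := by
    funext n
    have e1 : ∀ j, (-(w j))^(n j) =
        (-1:ℂ)^(n j) * (q^(b j))^(n j) * Complex.exp ((n j : ℂ) * ((a j : ℂ) * t)) := by
      intro j
      rw [hwdef, neg_pow, mul_pow, ← Complex.exp_nat_mul]
      ring
    rw [Finset.prod_congr rfl fun j _ => e1 j]
    simp only [Finset.prod_mul_distrib, Finset.prod_pow_eq_pow_sum, ← Complex.exp_sum,
      ← pow_mul]
    have e2 : ∑ j, b j * n j = ∑ j, n j * b j := Finset.sum_congr rfl fun j _ => mul_comm _ _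
    have e3 : ((((∑ j, (a j : ℝ) * n j) + x : ℝ)) : ℂ) * t =
        (x:ℂ)*t + ∑ j, (n j : ℂ) * ((a j : ℂ) * t) := by
      push_cast
      rw [add_mul, Finset.sum_mul, add_comm]
      congr 1
      exact Finset.sum_congr rfl fun j _ => by ring
    rw [e2, e3, Complex.exp_add]
    ring
  have hval : ((2:ℂ)^r * Complex.exp ((x:ℂ)*t)) * ∏ j, (w j + 1)⁻¹ =
      (2:ℂ)^r * Complex.exp ((x:ℂ) * t) / ∏ j, (q^(b j) * Complex.exp ((a j : ℂ) * t) + 1) := by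
    rw [Finset.prod_inv_distrib, div_eq_mul_inv]
  rw [hfun, hval] at hMul
  exact hMul

/-- For `0 < |q| < 1`, `x ≥ 0` and `k` a positive odd integer, the `k`-th
iterated derivative at `t = 0` of `t ↦ 2^r e^{xt} / ∏_j (q^{b_j} e^{a_j t} + 1)` equals
the absolutely convergent sum `2^r Σ_{n ∈ ℕ^r} (-1)^{Σ n_j} q^{Σ b_j n_j} (Σ a_j n_j + x)^k`. -/
theorem changhee_qEuler_polynomial_series
    (r : ℕ) (hr : 0 < r) (a b : Fin r → ℕ)
    (ha : ∀ j, 0 < a j) (hb : ∀ j, 0 < b j)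
    (q : ℂ) (hq0 : 0 < ‖q‖) (hq1 : ‖q‖ < 1)
    (x : ℝ) (hx : 0 ≤ x) (k : ℕ) (hk : 0 < k) (hkodd : Odd k) :
    HasSum
      (fun n : Fin r → ℕ =>
        (2 : ℂ) ^ r * (-1) ^ (∑ j, n j) * q ^ (∑ j, b j * n j) *
          (((∑ j, a j * n j : ℕ) : ℂ) + (x : ℂ)) ^ k)
      (iteratedDeriv k
        (fun t : ℂ =>
          (2 : ℂ) ^ r * Complex.exp ((x : ℂ) * t) /
            ∏ j, (q ^ (b j) * Complex.exp ((a j : ℂ) * t) + 1)) 0) := by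
  have hρ0 : 0 ≤ ‖q‖ := norm_nonneg q
  -- choose a radius R
  have hA : ∀ j, (a j : ℝ) ≤ ((∑ i, a i : ℕ) : ℝ) := fun j => by
    exact_mod_cast Finset.single_le_sum (f := a) (fun i _ => Nat.zero_le _) (Finset.mem_univ j)
  have hc : Continuous fun R : ℝ => ‖q‖ * Real.exp (((∑ i, a i : ℕ) : ℝ) * R) :=
    continuous_const.mul (Real.continuous_exp.comp (continuous_const.mul continuous_id))
  have hev : ∀ᶠ R in 𝓝 (0:ℝ), ‖q‖ * Real.exp (((∑ i, a i : ℕ) : ℝ) * R) < 1 := by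
    have h0 : ‖q‖ * Real.exp (((∑ i, a i : ℕ) : ℝ) * 0) = ‖q‖ := by simp
    have ht := hc.continuousAt (x := (0:ℝ))
    rw [ContinuousAt, h0] at ht
    exact Filter.Tendsto.eventually_lt_const hq1 ht
  obtain ⟨R, hRlt, hRmem⟩ :=
    ((hev.filter_mono (nhdsWithin_le_nhds (s := Set.Ioi (0:ℝ)))).and
      eventually_mem_nhdsWithin).exists
  have hR0 : (0:ℝ) < R := hRmem
  -- ratios
  have hs1 : ∀ j, ‖q‖ ^ (b j) * Real.exp ((a j : ℝ) * R) < 1 := by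
    intro j
    have h1 : ‖q‖ ^ (b j) ≤ ‖q‖ :=
      pow_le_of_le_one hρ0 hq1.le (hb j).ne'
    have h2 : Real.exp ((a j : ℝ) * R) ≤ Real.exp (((∑ i, a i : ℕ) : ℝ) * R) :=
      Real.exp_le_exp.2 (mul_le_mul_of_nonneg_right (hA j) hR0.le)
    calc ‖q‖ ^ (b j) * Real.exp ((a j : ℝ) * R)
        ≤ ‖q‖ * Real.exp (((∑ i, a i : ℕ) : ℝ) * R) :=
          mul_le_mul h1 h2 (Real.exp_nonneg _) hρ0
      _ < 1 := hRlt
  have hwt : ∀ t ∈ Metric.ball (0:ℂ) R, ∀ j,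
      ‖q‖ ^ (b j) * Real.exp ((a j : ℝ) * t.re) < 1 := by
    intro t ht j
    have htre : t.re ≤ R := by
      have h1 : ‖t‖ < R := by
        simpa [Complex.dist_eq] using Metric.mem_ball.mp ht
      exact (lt_of_le_of_lt (Complex.re_le_norm t) h1).le
    refine lt_of_le_of_lt ?_ (hs1 j)
    have := Real.exp_le_exp.2 (mul_le_mul_of_nonneg_left htre (by positivity : (0:ℝ) ≤ (a j : ℝ)))
    exact mul_le_mul_of_nonneg_left this (by positivity)
  -- summability of the bounds
  have hu : ∀ m : ℕ, Summable (fun n : Fin r → ℕ =>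
      (2^r * (x+1)^m * Real.exp (x*R)) *
        ∏ j, (((a j : ℝ) * n j + 1)^m *
          (‖q‖^(b j) * Real.exp ((a j : ℝ) * R))^(n j))) := by
    intro m
    apply Summable.mul_left
    apply aux_summable_pi_prod
      (g := fun j n => ((a j : ℝ) * n + 1)^m *
        (‖q‖^(b j) * Real.exp ((a j : ℝ) * R))^n)
    · intro j n
      positivity
    · intro j
      exact aux_summable_poly_geom m (a j) (by positivity) (by positivity) (hs1 j)
  -- main interchange
  have hcore := aux_core
    (c := fun n : Fin r → ℕ => (2:ℂ)^r * (-1)^(∑ j, n j) * q^(∑ j, b j * n j))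
    (lam := fun n : Fin r → ℕ => (∑ j, (a j : ℝ) * n j) + x)
    (u := fun m (n : Fin r → ℕ) => (2^r * (x+1)^m * Real.exp (x*R)) *
        ∏ j, (((a j : ℝ) * n j + 1)^m *
          (‖q‖^(b j) * Real.exp ((a j : ℝ) * R))^(n j)))
    hu
    (fun m n t ht => aux_bound a b q x R hx m n t ht)
    (fun t : ℂ =>
      (2 : ℂ) ^ r * Complex.exp ((x : ℂ) * t) /
        ∏ j, (q ^ (b j) * Complex.exp ((a j : ℂ) * t) + 1))
    (fun t ht => ((aux_expansion a b q x t (hwt t ht)).tsum_eq).symm)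
  have h0mem : (0:ℂ) ∈ Metric.ball (0:ℂ) R := Metric.mem_ball_self hR0
  have hit := hcore k 0 h0mem
  rw [hit]
  have hsm : Summable (fun n : Fin r → ℕ =>
      ((2:ℂ)^r * (-1)^(∑ j, n j) * q^(∑ j, b j * n j)) *
        ((((∑ j, (a j : ℝ) * n j) + x : ℝ)) : ℂ)^k *
        Complex.exp ((((∑ j, (a j : ℝ) * n j) + x : ℝ) : ℂ) * (0:ℂ))) := by
    apply Summable.of_norm_bounded (hu k)
    intro n
    exact aux_bound a b q x R hx k n 0 h0mem
  have hfe : (fun n : Fin r → ℕ =>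
        (2 : ℂ) ^ r * (-1) ^ (∑ j, n j) * q ^ (∑ j, b j * n j) *
          (((∑ j, a j * n j : ℕ) : ℂ) + (x : ℂ)) ^ k) =
      (fun n : Fin r → ℕ =>
        ((2:ℂ)^r * (-1)^(∑ j, n j) * q^(∑ j, b j * n j)) *
          ((((∑ j, (a j : ℝ) * n j) + x : ℝ)) : ℂ)^k *
          Complex.exp ((((∑ j, (a j : ℝ) * n j) + x : ℝ) : ℂ) * (0:ℂ))) := by
    funext n
    rw [mul_zero, Complex.exp_zero, mul_one]
    congr 2
    push_cast
    ring
  rw [hfe]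
  exact hsm.hasSum
end

section
/- Let r be a positive integer, a_1,…,a_r and b_1,…,b_r positive integers, q ∈ ℂ with 0 < |q| < 1, and x ∈ ℝ with x > 0. Then the function s ↦ ζ_r(s, x | a_1,…,a_r; b_1,…,b_r) = 2^r Σ_{n_1,…,n_r=0}^∞ (-1)^{n_1+⋯+n_r} q^{b_1 n_1+⋯+b_r n_r} (x + a_1 n_1 + ⋯ + a_r n_r)^{-s} is complex-differentiable at every point of ℂ (an entire function of s). -/
lemma my_one_add_sum_le_prod : ∀ (r : ℕ) (n : Fin r → ℕ),
    1 + ∑ j, n j ≤ ∏ j, (n j + 1) := by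
  intro r
  induction r with
  | zero => simp
  | succ r ih =>
    intro n
    rw [Fin.sum_univ_succ, Fin.prod_univ_succ]
    have := ih (Fin.tail n)
    have h1 : ∑ j : Fin r, Fin.tail n j = ∑ j : Fin r, n j.succ := rfl
    have h2 : ∏ j : Fin r, (Fin.tail n j + 1) = ∏ j : Fin r, (n j.succ + 1) := rfl
    rw [h1, h2] at this
    nlinarith [Nat.zero_le (n 0), Nat.zero_le (∑ j : Fin r, n j.succ)]

lemma my_summable_pi_prod {h : ℕ → ℝ} (h0 : ∀ k, 0 ≤ h k) (hs : Summable h) :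
    ∀ r : ℕ, Summable fun n : Fin r → ℕ => ∏ j, h (n j) := by
  intro r
  induction r with
  | zero =>
    simpa using summable_of_finite_support (Set.Finite.subset (Set.finite_univ)
      (Set.subset_univ _))
  | succ r ih =>
    have h2 : Summable fun p : ℕ × (Fin r → ℕ) => h p.1 * ∏ j, h (p.2 j) :=
      Summable.mul_of_nonneg (f := h) (g := fun n : Fin r → ℕ => ∏ j, h (n j)) hs ih
        (fun k => h0 k) (fun n => Finset.prod_nonneg fun j _ => h0 _)
    have h3 := ((Fin.consEquiv fun _ : Fin (r + 1) => ℕ).symm.summable_iff (f := fun p : ℕ × (Fin r → ℕ) =>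
      h p.1 * ∏ j, h (p.2 j))).mpr h2
    refine h3.congr fun n => ?_
    rw [Fin.prod_univ_succ]
    rfl




/-- For `0 < |q| < 1` and real `x > 0`, the multivariate Hurwitz-type
`q`-zeta function `s ↦ 2^r Σ_{n⃗ ∈ ℕ^r} (-1)^{Σ n_j} q^{Σ b_j n_j} (x + Σ a_j n_j)^{-s}`
is complex-differentiable at every point of `ℂ` (an entire function of `s`). -/
theorem changhee_qZeta_entire
    (r : ℕ) (hr : 0 < r) (a b : Fin r → ℕ)
    (ha : ∀ j, 0 < a j) (hb : ∀ j, 0 < b j)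
    (q : ℂ) (hq0 : 0 < ‖q‖) (hq1 : ‖q‖ < 1)
    (x : ℝ) (hx : 0 < x) (s : ℂ) :
    DifferentiableAt ℂ
      (fun s : ℂ =>
        (2 : ℂ) ^ r * ∑' n : Fin r → ℕ,
          (-1 : ℂ) ^ (∑ j, n j) * q ^ (∑ j, b j * n j) *
            (((x + (∑ j, a j * n j : ℕ) : ℝ) : ℂ)) ^ (-s)) s := by
  set Q : ℝ := ‖q‖ with hQdef
  have hQ0 : 0 ≤ Q := norm_nonneg q
  have hQpos : 0 < Q := hq0
  set M : ℝ := |s.re| + 1 with hMdef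
  have hM0 : 0 ≤ M := by positivity
  set m : ℕ := ⌈M⌉₊ with hmdef
  set C : ℝ := ((∑ j, a j : ℕ) : ℝ) with hCdef
  have hC0 : 0 ≤ C := Nat.cast_nonneg _
  -- the open set
  set U : Set ℂ := {w : ℂ | |w.re| < M} with hUdef
  have hUopen : IsOpen U := isOpen_lt (Complex.continuous_re.abs) continuous_const
  have hsU : s ∈ U := by simp [hUdef, hMdef]
  -- summable majorant ingredients
  have hh1 : Summable fun k : ℕ => Q ^ k := summable_geometric_of_lt_one hQ0 hq1
  have hh2 : Summable fun k : ℕ => Q ^ k * ((k : ℝ) + 1) ^ m := by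
    have base : Summable fun k : ℕ => (k : ℝ) ^ m * Q ^ k :=
      summable_pow_mul_geometric_of_norm_lt_one m
        (by rwa [Real.norm_eq_abs, abs_of_nonneg hQ0])
    have s2 : Summable ((fun k : ℕ => (k : ℝ) ^ m * Q ^ k) ∘ Nat.succ) :=
      base.comp_injective Nat.succ_injective
    have s3 := s2.mul_right Q⁻¹
    refine s3.congr fun k => ?_
    have : Q ^ (k + 1) = Q ^ k * Q := pow_succ Q k
    simp only [Function.comp, Nat.succ_eq_add_one, this]
    push_cast
    field_simp
  -- the majorant
  set u : (Fin r → ℕ) → ℝ := fun n =>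
    x ^ (-M) * ∏ j, Q ^ (n j) + (x + C) ^ M * ∏ j, (Q ^ (n j) * ((n j : ℝ) + 1) ^ m)
    with hudef
  have hu : Summable u := by
    refine Summable.add ?_ ?_
    · exact (my_summable_pi_prod (fun k => pow_nonneg hQ0 k) hh1 r).mul_left _
    · exact (my_summable_pi_prod
        (fun k => by positivity) hh2 r).mul_left _
  -- each term is differentiable
  have hdiff : ∀ n : Fin r → ℕ, DifferentiableOn ℂ
      (fun w : ℂ => (-1 : ℂ) ^ (∑ j, n j) * q ^ (∑ j, b j * n j) *
        (((x + (∑ j, a j * n j : ℕ) : ℝ) : ℂ)) ^ (-w)) U := by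
    intro n
    have hz : (0 : ℝ) < x + (∑ j, a j * n j : ℕ) := by positivity
    have hne : (((x + (∑ j, a j * n j : ℕ) : ℝ)) : ℂ) ≠ 0 :=
      Complex.ofReal_ne_zero.mpr (ne_of_gt hz)
    exact (((differentiable_id.neg).const_cpow (Or.inl hne)).const_mul _).differentiableOn
  -- the bound
  have hbound : ∀ (n : Fin r → ℕ) (w : ℂ), w ∈ U →
      ‖(-1 : ℂ) ^ (∑ j, n j) * q ^ (∑ j, b j * n j) *
        (((x + (∑ j, a j * n j : ℕ) : ℝ) : ℂ)) ^ (-w)‖ ≤ u n := by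
    intro n w hw
    have hwre : |w.re| < M := hw
    obtain ⟨hw1, hw2⟩ := abs_lt.mp hwre
    set N : ℕ := ∑ j, n j with hNdef
    set B : ℕ := ∑ j, b j * n j with hBdef
    set z : ℝ := x + (∑ j, a j * n j : ℕ) with hzdef
    have hz : 0 < z := by positivity
    have hxz : x ≤ z := by
      rw [hzdef]; exact le_add_of_nonneg_right (Nat.cast_nonneg _)
    -- norm computation
    have hnorm : ‖(-1 : ℂ) ^ N * q ^ B * ((z : ℝ) : ℂ) ^ (-w)‖ = Q ^ B * z ^ (-w.re) := by
      rw [norm_mul, norm_mul, norm_pow, norm_pow, norm_neg, norm_one, one_pow, one_mul,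
        Complex.norm_cpow_eq_rpow_re_of_pos hz,
        Complex.neg_re]
    rw [hnorm]
    -- step 1: z ^ (-w.re) ≤ x ^ (-M) + z ^ M
    have step1 : z ^ (-w.re) ≤ x ^ (-M) + z ^ M := by
      rcases le_or_gt 1 z with h1z | h1z
      · have : z ^ (-w.re) ≤ z ^ M :=
          Real.rpow_le_rpow_of_exponent_le h1z (by linarith)
        have hx0 : 0 ≤ x ^ (-M) := Real.rpow_nonneg hx.le _
        linarith
      · have e1 : z ^ (-w.re) ≤ z ^ (-M) :=
          Real.rpow_le_rpow_of_exponent_ge hz h1z.le (by linarith)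
        have e2 : z ^ (-M) ≤ x ^ (-M) := by
          rw [Real.rpow_neg hx.le, Real.rpow_neg hz.le]
          exact inv_anti₀ (Real.rpow_pos_of_pos hx _)
            (Real.rpow_le_rpow hx.le hxz hM0)
        have hz0 : 0 ≤ z ^ M := Real.rpow_nonneg hz.le _
        linarith
    -- step 2: Q ^ B ≤ Q ^ N
    have hNB : N ≤ B := by
      refine Finset.sum_le_sum fun j _ => ?_
      exact Nat.le_mul_of_pos_left (n j) (hb j)
    have step2 : Q ^ B ≤ Q ^ N := pow_le_pow_of_le_one hQ0 hq1.le hNB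
    -- step 3: z ^ M ≤ (x + C) ^ M * ∏ j, ((n j : ℝ) + 1) ^ m
    set P : ℝ := ∏ j, ((n j : ℝ) + 1) with hPdef
    have hP1 : (1 : ℝ) + N ≤ P := by
      have := my_one_add_sum_le_prod r n
      have : ((1 + ∑ j, n j : ℕ) : ℝ) ≤ ((∏ j, (n j + 1) : ℕ) : ℝ) := Nat.cast_le.mpr this
      push_cast at this
      simpa [hPdef, hNdef] using this
    have hP1' : (1 : ℝ) ≤ P := by
      have : (0 : ℝ) ≤ N := Nat.cast_nonneg _
      linarith
    have hzP : z ≤ (x + C) * P := by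
      have hAN : (∑ j, a j * n j : ℕ) ≤ (∑ j, a j) * N := by
        rw [Finset.sum_mul]
        refine Finset.sum_le_sum fun j _ => ?_
        exact Nat.mul_le_mul_left _ (Finset.single_le_sum (fun i _ => Nat.zero_le _)
          (Finset.mem_univ j))
      have hAN' : ((∑ j, a j * n j : ℕ) : ℝ) ≤ C * N := by
        rw [hCdef]
        exact_mod_cast hAN
      have hN0 : (0 : ℝ) ≤ N := Nat.cast_nonneg _
      nlinarith
    have step3 : z ^ M ≤ (x + C) ^ M * ∏ j, ((n j : ℝ) + 1) ^ m := by
      have e1 : z ^ M ≤ ((x + C) * P) ^ M := Real.rpow_le_rpow hz.le hzP hM0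
      have e2 : ((x + C) * P) ^ M = (x + C) ^ M * P ^ M :=
        Real.mul_rpow (by positivity) (by linarith)
      have e3 : P ^ M ≤ P ^ (m : ℝ) :=
        Real.rpow_le_rpow_of_exponent_le hP1' (Nat.le_ceil M)
      have e4 : P ^ (m : ℝ) = P ^ m := Real.rpow_natCast P m
      have e5 : P ^ m = ∏ j, ((n j : ℝ) + 1) ^ m := by
        rw [hPdef, Finset.prod_pow]
      have hxC : (0 : ℝ) ≤ (x + C) ^ M := Real.rpow_nonneg (by linarith) _
      calc z ^ M ≤ (x + C) ^ M * P ^ M := by rw [← e2]; exact e1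
        _ ≤ (x + C) ^ M * P ^ (m : ℝ) := by
            exact mul_le_mul_of_nonneg_left e3 hxC
        _ = (x + C) ^ M * ∏ j, ((n j : ℝ) + 1) ^ m := by rw [e4, e5]
    -- assemble
    have hprodQ : ∏ j, Q ^ (n j) = Q ^ N := Finset.prod_pow_eq_pow_sum _ _ _
    have hprod2 : ∏ j, (Q ^ (n j) * ((n j : ℝ) + 1) ^ m)
        = Q ^ N * ∏ j, ((n j : ℝ) + 1) ^ m := by
      rw [Finset.prod_mul_distrib, hprodQ]
    have hQN0 : 0 ≤ Q ^ N := pow_nonneg hQ0 N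
    have hQB0 : 0 ≤ Q ^ B := pow_nonneg hQ0 B
    have hzw0 : 0 ≤ z ^ (-w.re) := Real.rpow_nonneg hz.le _
    have hstep : Q ^ B * z ^ (-w.re) ≤ Q ^ N * (x ^ (-M) + z ^ M) := by
      have h0 : 0 ≤ x ^ (-M) + z ^ M := by
        have := Real.rpow_nonneg hx.le (-M)
        have := Real.rpow_nonneg hz.le M
        linarith
      exact mul_le_mul step2 step1 hzw0 hQN0
    have hfinal : Q ^ N * (x ^ (-M) + z ^ M) ≤ u n := by
      rw [hudef]
      simp only [hprodQ, hprod2]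
      have hxM0 : 0 ≤ x ^ (-M) := Real.rpow_nonneg hx.le _
      have h3 := mul_le_mul_of_nonneg_left step3 hQN0
      nlinarith [Real.rpow_nonneg hz.le M]
    linarith
  exact ((Complex.differentiableOn_tsum_of_summable_norm hu hdiff hUopen hbound).differentiableAt
    (hUopen.mem_nhds hsU)).const_mul _
end

section
/- Let r be a positive integer, a_1,…,a_r and b_1,…,b_r positive integers, q ∈ ℂ with 0 < |q| < 1, f an odd positive integer, χ a Dirichlet character modulo f, and n a positive odd integer. Then 2^r Σ_{m_1,…,m_r=0}^∞ (-1)^{m_1+⋯+m_r} q^{b_1 m_1+⋯+b_r m_r} χ(m_1)⋯χ(m_r) (a_1 m_1+⋯+a_r m_r)^n = f^n Σ_{n_1,…,n_r=0}^{f-1} (-1)^{n_1+⋯+n_r} χ(n_1)⋯χ(n_r) q^{b_1 n_1+⋯+b_r n_r} · [ 2^r Σ_{x_1,…,x_r=0}^∞ (-1)^{x_1+⋯+x_r} (q^f)^{b_1 x_1+⋯+b_r x_r} ((a_1 n_1+⋯+a_r n_r)/f + a_1 x_1+⋯+a_r x_r)^n ], where all infinite sums run over tuples in ℕ^r and converge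 absolutely (this is the distribution relation E_{n,χ,q}^{(r)} = f^n Σ_{n⃗} (-1)^{Σ n_j} ∏ χ(n_j) q^{Σ b_j n_j} E_{n,q^f}^{(r)}((Σ a_j n_j)/f | a_1,…,a_r; b_1,…,b_r)). -/
lemma aux_one_var (n : ℕ) {ρ : ℝ} (h0 : 0 ≤ ρ) (h1 : ρ < 1) :
    Summable (fun k : ℕ => (1 + (k : ℝ)) ^ n * ρ ^ k) := by
  have hρ : ‖ρ‖ < 1 := by rwa [Real.norm_eq_abs, abs_of_nonneg h0]
  have h : Summable (fun k : ℕ => ∑ i ∈ Finset.range (n + 1),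
      ((k : ℝ) ^ (n - i) * ρ ^ k * (n.choose i : ℝ))) :=
    summable_sum fun i _ =>
      (summable_pow_mul_geometric_of_norm_lt_one (n - i) hρ).mul_right _
  refine h.congr fun k => ?_
  rw [add_pow, Finset.sum_mul]
  refine Finset.sum_congr rfl fun i _ => ?_
  ring

lemma aux_pi_prod {r : ℕ} {g : ℕ → ℝ} (hg0 : ∀ k, 0 ≤ g k) (hg : Summable g) :
    Summable (fun m : Fin r → ℕ => ∏ j, g (m j)) := by
  induction r with
  | zero => exact .of_finite
  | succ r ih =>
      have h := hg.mul_of_nonneg ih (fun k => hg0 k)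
        (fun m => Finset.prod_nonneg fun j _ => hg0 _)
      refine ((Fin.consEquiv (fun _ : Fin (r + 1) => ℕ)).summable_iff).1 (h.congr fun p => ?_)
      simp [Fin.prod_univ_succ]

lemma aux_summable {r n : ℕ} (a b : Fin r → ℕ) (hb : ∀ j, 0 < b j) {ρ : ℝ}
    (h0 : 0 ≤ ρ) (h1 : ρ < 1) (t : ℝ) (ht : 0 ≤ t) (F : (Fin r → ℕ) → ℂ)
    (hF : ∀ m, ‖F m‖ ≤ ρ ^ (∑ j, b j * m j) * (t + ∑ j, ((a j * m j : ℕ) : ℝ)) ^ n) :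
    Summable F := by
  set C : ℝ := (t + ∑ j, (a j : ℝ)) ^ n with hC
  have hsum : Summable (fun m : Fin r → ℕ => C * ∏ j, ((1 + (m j : ℝ)) ^ n * ρ ^ m j)) :=
    (aux_pi_prod (fun k => mul_nonneg (by positivity) (pow_nonneg h0 k))
      (aux_one_var n h0 h1)).mul_left C
  refine Summable.of_norm_bounded hsum fun m => ?_
  refine (hF m).trans ?_
  have hone : ∀ (s : Finset (Fin r)), (1 : ℝ) ≤ ∏ j ∈ s, (1 + (m j : ℝ)) := by
    intro s
    calc (1 : ℝ) = ∏ j ∈ s, 1 := (Finset.prod_const_one).symm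
      _ ≤ ∏ j ∈ s, (1 + (m j : ℝ)) :=
        Finset.prod_le_prod (fun i _ => zero_le_one)
          (fun i _ => le_add_of_nonneg_right (Nat.cast_nonneg _))
  have hP1 : (1 : ℝ) ≤ ∏ j, (1 + (m j : ℝ)) := hone Finset.univ
  have hkey : t + ∑ j, ((a j * m j : ℕ) : ℝ) ≤ (t + ∑ j, (a j : ℝ)) * ∏ j, (1 + (m j : ℝ)) := by
    rw [add_mul, Finset.sum_mul]
    refine add_le_add (le_mul_of_one_le_right ht hP1) (Finset.sum_le_sum fun j _ => ?_)
    push_cast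
    have h1 : ((m j : ℝ)) ≤ ∏ i, (1 + (m i : ℝ)) := by
      have h2 : (1 + (m j : ℝ)) ≤ ∏ i, (1 + (m i : ℝ)) := by
        rw [← Finset.mul_prod_erase _ _ (Finset.mem_univ j)]
        exact le_mul_of_one_le_right (by positivity) (hone _)
      linarith
    have := mul_le_mul_of_nonneg_left h1 (by positivity : (0:ℝ) ≤ (a j : ℝ))
    linarith
  have h2 : (t + ∑ j, ((a j * m j : ℕ) : ℝ)) ^ n ≤ C * ∏ j, (1 + (m j : ℝ)) ^ n := by
    calc (t + ∑ j, ((a j * m j : ℕ) : ℝ)) ^ n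
        ≤ ((t + ∑ j, (a j : ℝ)) * ∏ j, (1 + (m j : ℝ))) ^ n := by
          apply pow_le_pow_left₀ (by positivity) hkey
      _ = C * ∏ j, (1 + (m j : ℝ)) ^ n := by rw [mul_pow, Finset.prod_pow]
  have h3 : ρ ^ (∑ j, b j * m j) ≤ ∏ j, ρ ^ (m j) := by
    rw [Finset.prod_pow_eq_pow_sum]
    exact pow_le_pow_of_le_one h0 h1.le
      (Finset.sum_le_sum fun j _ => Nat.le_mul_of_pos_left _ (hb j))
  calc ρ ^ (∑ j, b j * m j) * (t + ∑ j, ((a j * m j : ℕ) : ℝ)) ^ n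
      ≤ (∏ j, ρ ^ (m j)) * (C * ∏ j, (1 + (m j : ℝ)) ^ n) := by
        apply mul_le_mul h3 h2 (by positivity) (Finset.prod_nonneg fun j _ => pow_nonneg h0 _)
    _ = C * ∏ j, ((1 + (m j : ℝ)) ^ n * ρ ^ m j) := by
        rw [mul_left_comm, ← Finset.prod_mul_distrib]
        congr 1
        exact Finset.prod_congr rfl fun j _ => mul_comm _ _

/-- Splitting `ℕ^r` as `{0,…,f-1}^r × ℕ^r` via `m j = c j + f * y j`. -/
def distEquiv (r f : ℕ) (hf : 0 < f) : (Fin r → Fin f) × (Fin r → ℕ) ≃ (Fin r → ℕ) where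
  toFun p := fun j => (p.1 j : ℕ) + f * p.2 j
  invFun m := (fun j => ⟨m j % f, Nat.mod_lt _ hf⟩, fun j => m j / f)
  left_inv := by
    rintro ⟨c, y⟩
    refine Prod.ext (funext fun j => ?_) (funext fun j => ?_)
    · apply Fin.ext
      simp only
      rw [Nat.add_mul_mod_self_left, Nat.mod_eq_of_lt (c j).2]
    · simp only
      rw [Nat.add_mul_div_left _ _ hf, Nat.div_eq_of_lt (c j).2, zero_add]
  right_inv := fun m => funext fun j => by
    simp only
    rw [Nat.mod_add_div]



/-- Distribution relation for the multivariate generalized `q`-Euler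
numbers attached to a Dirichlet character `χ` mod `f` (`f` odd), for `n` a positive
odd integer:
`E_{n,χ,q}^{(r)} = f^n Σ_{n⃗ ∈ {0,…,f-1}^r} (-1)^{Σ n_j} ∏_j χ(n_j) q^{Σ b_j n_j} ·
  E_{n,q^f}^{(r)}((Σ a_j n_j)/f)`,
where both sides are given by absolutely convergent multivariate series. -/
theorem changhee_qEuler_distribution_relation
    (r : ℕ) (hr : 0 < r) (a b : Fin r → ℕ)
    (ha : ∀ j, 0 < a j) (hb : ∀ j, 0 < b j)
    (q : ℂ) (hq0 : 0 < ‖q‖) (hq1 : ‖q‖ < 1)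
    (f : ℕ) (hf : 0 < f) (hfodd : Odd f)
    (χ : DirichletCharacter ℂ f)
    (n : ℕ) (hn : 0 < n) (hnodd : Odd n) :
    Summable
        (fun m : Fin r → ℕ =>
          (-1 : ℂ) ^ (∑ j, m j) * q ^ (∑ j, b j * m j) * (∏ j, χ (m j)) *
            ((∑ j, a j * m j : ℕ) : ℂ) ^ n)
      ∧ (∀ c : Fin r → Fin f,
          Summable
            (fun y : Fin r → ℕ =>
              (-1 : ℂ) ^ (∑ j, y j) * (q ^ f) ^ (∑ j, b j * y j) *
                (((∑ j, a j * (c j : ℕ) : ℕ) : ℂ) / (f : ℂ) +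
                  ((∑ j, a j * y j : ℕ) : ℂ)) ^ n))
      ∧ (2 : ℂ) ^ r * (∑' m : Fin r → ℕ,
            (-1 : ℂ) ^ (∑ j, m j) * q ^ (∑ j, b j * m j) * (∏ j, χ (m j)) *
              ((∑ j, a j * m j : ℕ) : ℂ) ^ n)
          = (f : ℂ) ^ n * ∑ c : Fin r → Fin f,
              (-1 : ℂ) ^ (∑ j, (c j : ℕ)) * (∏ j, χ ((c j : ℕ) : ZMod f)) *
                q ^ (∑ j, b j * (c j : ℕ)) *
                ((2 : ℂ) ^ r * ∑' y : Fin r → ℕ,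
                  (-1 : ℂ) ^ (∑ j, y j) * (q ^ f) ^ (∑ j, b j * y j) *
                    (((∑ j, a j * (c j : ℕ) : ℕ) : ℂ) / (f : ℂ) +
                      ((∑ j, a j * y j : ℕ) : ℂ)) ^ n) := by
  have hρ0 : (0 : ℝ) ≤ ‖q‖ := norm_nonneg q
  have hf0 : (f : ℂ) ≠ 0 := Nat.cast_ne_zero.2 hf.ne'
  -- Part 1: summability of the main series
  have hS1 : Summable
      (fun m : Fin r → ℕ =>
        (-1 : ℂ) ^ (∑ j, m j) * q ^ (∑ j, b j * m j) * (∏ j, χ (m j)) *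
          ((∑ j, a j * m j : ℕ) : ℂ) ^ n) := by
    refine aux_summable (n := n) a b hb hρ0 hq1 0 le_rfl _ fun m => ?_
    have h1 : ‖(-1 : ℂ) ^ (∑ j, m j) * q ^ (∑ j, b j * m j) * (∏ j, χ (m j)) *
        ((∑ j, a j * m j : ℕ) : ℂ) ^ n‖
        = ‖q‖ ^ (∑ j, b j * m j) * ‖∏ j, χ ((m j : ZMod f))‖ *
          ((∑ j, a j * m j : ℕ) : ℝ) ^ n := by
      simp only [norm_mul, norm_pow, norm_neg, norm_one, one_pow, one_mul,
        Complex.norm_natCast]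
    rw [h1]
    have h2 : ‖∏ j, χ ((m j : ZMod f))‖ ≤ 1 := by
      rw [norm_prod]
      exact Finset.prod_le_one (fun j _ => norm_nonneg _) (fun j _ => χ.norm_le_one _)
    have h3 : ((∑ j, a j * m j : ℕ) : ℝ) = 0 + ∑ j, ((a j * m j : ℕ) : ℝ) := by
      push_cast; ring
    rw [h3]
    calc ‖q‖ ^ (∑ j, b j * m j) * ‖∏ j, χ ((m j : ZMod f))‖ *
          (0 + ∑ j, ((a j * m j : ℕ) : ℝ)) ^ n
        ≤ ‖q‖ ^ (∑ j, b j * m j) * 1 *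
          (0 + ∑ j, ((a j * m j : ℕ) : ℝ)) ^ n := by gcongr
      _ = ‖q‖ ^ (∑ j, b j * m j) * (0 + ∑ j, ((a j * m j : ℕ) : ℝ)) ^ n := by
          ring
  -- Part 2: summability of each inner series
  have hS2 : ∀ c : Fin r → Fin f,
      Summable
        (fun y : Fin r → ℕ =>
          (-1 : ℂ) ^ (∑ j, y j) * (q ^ f) ^ (∑ j, b j * y j) *
            (((∑ j, a j * (c j : ℕ) : ℕ) : ℂ) / (f : ℂ) +
              ((∑ j, a j * y j : ℕ) : ℂ)) ^ n) := by
    intro c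
    set t : ℝ := ((∑ j, a j * (c j : ℕ) : ℕ) : ℝ) / (f : ℝ) with ht
    have ht0 : 0 ≤ t := by positivity
    refine aux_summable (n := n) a b hb (ρ := ‖q‖ ^ f) (pow_nonneg hρ0 f)
      (pow_lt_one₀ hρ0 hq1 hf.ne') t ht0 _ fun y => ?_
    have hTN : ((∑ j, a j * (c j : ℕ) : ℕ) : ℂ) / (f : ℂ) + ((∑ j, a j * y j : ℕ) : ℂ)
        = (((t + ∑ j, ((a j * y j : ℕ) : ℝ)) : ℝ) : ℂ) := by
      rw [ht]; push_cast; ring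
    rw [hTN]
    have h1 : ‖(-1 : ℂ) ^ (∑ j, y j) * (q ^ f) ^ (∑ j, b j * y j) *
        (((t + ∑ j, ((a j * y j : ℕ) : ℝ) : ℝ)) : ℂ) ^ n‖
        = (‖q‖ ^ f) ^ (∑ j, b j * y j) *
          |t + ∑ j, ((a j * y j : ℕ) : ℝ)| ^ n := by
      simp only [norm_mul, norm_pow, norm_neg, norm_one, one_pow, one_mul,
        Complex.norm_real, Real.norm_eq_abs]
    rw [h1, abs_of_nonneg (by positivity)]
  refine ⟨hS1, hS2, ?_⟩
  -- Part 3: the distribution relation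
  set F : (Fin r → ℕ) → ℂ := fun m =>
    (-1 : ℂ) ^ (∑ j, m j) * q ^ (∑ j, b j * m j) * (∏ j, χ (m j)) *
      ((∑ j, a j * m j : ℕ) : ℂ) ^ n with hFdef
  set e := distEquiv r f hf with he
  have key : ∀ (c : Fin r → Fin f) (y : Fin r → ℕ),
      F (e (c, y))
        = ((f : ℂ) ^ n * ((-1 : ℂ) ^ (∑ j, (c j : ℕ)) * (∏ j, χ ((c j : ℕ) : ZMod f)) *
            q ^ (∑ j, b j * (c j : ℕ)))) *
          ((-1 : ℂ) ^ (∑ j, y j) * (q ^ f) ^ (∑ j, b j * y j) *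
            (((∑ j, a j * (c j : ℕ) : ℕ) : ℂ) / (f : ℂ) +
              ((∑ j, a j * y j : ℕ) : ℂ)) ^ n) := by
    intro c y
    have h1 : (∑ j, ((c j : ℕ) + f * y j)) = (∑ j, (c j : ℕ)) + f * ∑ j, y j := by
      rw [Finset.sum_add_distrib, Finset.mul_sum]
    have h2 : (∑ j, b j * ((c j : ℕ) + f * y j))
        = (∑ j, b j * (c j : ℕ)) + f * ∑ j, b j * y j := by
      rw [Finset.mul_sum, ← Finset.sum_add_distrib]
      exact Finset.sum_congr rfl fun j _ => by ring
    have h3 : (∑ j, a j * ((c j : ℕ) + f * y j))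
        = (∑ j, a j * (c j : ℕ)) + f * ∑ j, a j * y j := by
      rw [Finset.mul_sum, ← Finset.sum_add_distrib]
      exact Finset.sum_congr rfl fun j _ => by ring
    have hχ : (∏ j, χ ((((c j : ℕ) + f * y j : ℕ)) : ZMod f))
        = ∏ j, χ ((c j : ℕ) : ZMod f) := by
      refine Finset.prod_congr rfl fun j _ => ?_
      congr 1
      push_cast [ZMod.natCast_self]
      ring
    have h5 : ((-1 : ℂ)) ^ ((∑ j, (c j : ℕ)) + f * ∑ j, y j)
        = (-1 : ℂ) ^ (∑ j, (c j : ℕ)) * (-1 : ℂ) ^ (∑ j, y j) := by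
      rw [pow_add, pow_mul, hfodd.neg_one_pow]
    have h6 : q ^ ((∑ j, b j * (c j : ℕ)) + f * ∑ j, b j * y j)
        = q ^ (∑ j, b j * (c j : ℕ)) * (q ^ f) ^ (∑ j, b j * y j) := by
      rw [pow_add, pow_mul]
    have h7 : (((∑ j, a j * (c j : ℕ)) + f * ∑ j, a j * y j : ℕ) : ℂ)
        = (f : ℂ) * (((∑ j, a j * (c j : ℕ) : ℕ) : ℂ) / (f : ℂ) +
            ((∑ j, a j * y j : ℕ) : ℂ)) := by
      push_cast
      field_simp
    show (-1 : ℂ) ^ (∑ j, ((c j : ℕ) + f * y j)) *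
        q ^ (∑ j, b j * ((c j : ℕ) + f * y j)) *
        (∏ j, χ ((((c j : ℕ) + f * y j : ℕ)) : ZMod f)) *
        ((∑ j, a j * ((c j : ℕ) + f * y j) : ℕ) : ℂ) ^ n = _
    rw [h1, h2, h3, hχ, h5, h6, h7, mul_pow]
    ring
  have hSe : Summable (fun p : (Fin r → Fin f) × (Fin r → ℕ) => F (e p)) :=
    (e.summable_iff (f := F)).2 hS1
  calc (2 : ℂ) ^ r * ∑' m, F m
      = (2 : ℂ) ^ r * ∑' p : (Fin r → Fin f) × (Fin r → ℕ), F (e p) := by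
        rw [e.tsum_eq F]
    _ = (2 : ℂ) ^ r * ∑ c : Fin r → Fin f, ∑' y : Fin r → ℕ, F (e (c, y)) := by
        rw [hSe.tsum_prod, tsum_fintype]
    _ = (f : ℂ) ^ n * ∑ c : Fin r → Fin f,
          (-1 : ℂ) ^ (∑ j, (c j : ℕ)) * (∏ j, χ ((c j : ℕ) : ZMod f)) *
            q ^ (∑ j, b j * (c j : ℕ)) *
            ((2 : ℂ) ^ r * ∑' y : Fin r → ℕ,
              (-1 : ℂ) ^ (∑ j, y j) * (q ^ f) ^ (∑ j, b j * y j) *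
                (((∑ j, a j * (c j : ℕ) : ℕ) : ℂ) / (f : ℂ) +
                  ((∑ j, a j * y j : ℕ) : ℂ)) ^ n) := by
        rw [Finset.mul_sum, Finset.mul_sum]
        refine Finset.sum_congr rfl fun c _ => ?_
        rw [tsum_congr (key c), tsum_mul_left]
        ring
end

section
/- Let p be an odd prime, q a p-adic integer with |q − 1|_p < 1, x a p-adic integer, and n a natural number. Then the sequence N ↦ Σ_{y=0}^{p^N − 1} (-1)^y q^y (x + y)^n converges in ℤ_p as N → ∞; i.e., there exists L ∈ ℤ_p such that the partial sums Σ_{y=0}^{p^N − 1} (-1)^y q^y (x + y)^n tend to L (this limit is the p-adic fermionic q-integral defining the q-Euler polynomial E_{n,q}(x) = ∫_{ℤ_p} q^y (x+y)^n dμ_{−1}(y)). -/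
private lemma sum_range_mul' {M : Type*} [AddCommMonoid M] (f : ℕ → M) (a b : ℕ) :
    ∑ y ∈ Finset.range (a * b), f y
      = ∑ j ∈ Finset.range a, ∑ i ∈ Finset.range b, f (j * b + i) := by
  induction a with
  | zero => simp
  | succ a ih =>
      rw [Nat.succ_mul, Finset.sum_range_add, ih, Finset.sum_range_succ]

private lemma key1 {p : ℕ} [Fact p.Prime] (q : ℤ_[p]) (hq : (p : ℤ_[p]) ∣ q - 1) :
    ∀ N : ℕ, (p : ℤ_[p]) ^ (N + 1) ∣ q ^ (p ^ N) - 1 := by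
  intro N
  induction N with
  | zero => simpa using hq
  | succ N ih =>
      set a : ℤ_[p] := q ^ (p ^ N) with ha
      have h1 : q ^ (p ^ (N + 1)) - 1 = (∑ i ∈ Finset.range p, a ^ i) * (a - 1) := by
        rw [geom_sum_mul, ha, ← pow_mul, ← pow_succ]
      -- ∑ a^i = p + (a-1)*c
      have h2 : (a - 1) ∣ (∑ i ∈ Finset.range p, a ^ i) - (p : ℤ_[p]) := by
        have : (∑ i ∈ Finset.range p, a ^ i) - (p : ℤ_[p])
            = ∑ i ∈ Finset.range p, (a ^ i - 1) := by
          rw [Finset.sum_sub_distrib]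
          simp
        rw [this]
        refine Finset.dvd_sum fun i _ => ?_
        simpa using sub_dvd_pow_sub_pow a 1 i
      obtain ⟨c, hc⟩ := h2
      have hS : (∑ i ∈ Finset.range p, a ^ i) = (p : ℤ_[p]) + (a - 1) * c := by
        linear_combination hc
      rw [h1, hS]
      have hd : ((p : ℤ_[p]) + (a - 1) * c) * (a - 1)
          = (p : ℤ_[p]) * (a - 1) + (a - 1) * ((a - 1) * c) := by ring
      rw [hd]
      refine dvd_add ?_ ?_
      · rw [pow_succ']
        exact mul_dvd_mul (dvd_refl _) ih
      · calc (p : ℤ_[p]) ^ (N + 1 + 1) ∣ (p : ℤ_[p]) ^ (N + 1) * (p : ℤ_[p]) ^ (N + 1) := by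
              rw [← pow_add]; exact pow_dvd_pow _ (by omega)
        _ ∣ (a - 1) * ((a - 1) * c) := by
              exact mul_dvd_mul ih (Dvd.dvd.mul_right ih c)

private lemma key2 {p : ℕ} [Fact p.Prime] (q : ℤ_[p]) (hq : (p : ℤ_[p]) ∣ q - 1)
    (x : ℤ_[p]) (n : ℕ) (N j i : ℕ) :
    (p : ℤ_[p]) ^ N ∣
      q ^ (j * p ^ N + i) * (x + ((j * p ^ N + i : ℕ) : ℤ_[p])) ^ n
        - q ^ i * (x + (i : ℤ_[p])) ^ n := by
  set X : ℤ_[p] := x + (i : ℤ_[p])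
  set Y : ℤ_[p] := x + ((j * p ^ N + i : ℕ) : ℤ_[p])
  have hqp : (p : ℤ_[p]) ^ N ∣ q ^ (j * p ^ N) - 1 := by
    have h1 : (p : ℤ_[p]) ^ N ∣ q ^ (p ^ N) - 1 :=
      dvd_trans (pow_dvd_pow _ (Nat.le_succ N)) (key1 q hq N)
    have h2 : q ^ (p ^ N) - 1 ∣ q ^ (p ^ N * j) - 1 := by
      simpa [pow_mul] using sub_dvd_pow_sub_pow (q ^ (p ^ N)) 1 j
    rw [mul_comm j]
    exact h1.trans h2
  have hY : (p : ℤ_[p]) ^ N ∣ Y - X := by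
    have : Y - X = ((j : ℤ_[p]) * (p : ℤ_[p]) ^ N) := by
      simp only [X, Y]
      push_cast
      ring
    rw [this]
    exact Dvd.dvd.mul_left dvd_rfl _
  have hYn : (p : ℤ_[p]) ^ N ∣ Y ^ n - X ^ n :=
    dvd_trans hY (sub_dvd_pow_sub_pow Y X n)
  have key : q ^ (j * p ^ N + i) * Y ^ n - q ^ i * X ^ n
      = q ^ i * ((q ^ (j * p ^ N) - 1) * Y ^ n) + q ^ i * (Y ^ n - X ^ n) := by
    rw [pow_add]; ring
  rw [key]
  exact dvd_add (Dvd.dvd.mul_left (hqp.mul_right _) _) (Dvd.dvd.mul_left hYn _)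

/-- Let `p` be an odd prime, `q ∈ ℤ_p` with `|q - 1|_p < 1`, `x ∈ ℤ_p`
and `n ∈ ℕ`. Then the sequence `N ↦ Σ_{y=0}^{p^N - 1} (-1)^y q^y (x + y)^n` converges
in `ℤ_p`; its limit is the fermionic `p`-adic `q`-integral defining `E_{n,q}(x)`. -/
theorem changhee_fermionic_integral_exists
    (p : ℕ) [Fact p.Prime] (hpodd : Odd p)
    (q : ℤ_[p]) (hq : ‖q - 1‖ < 1)
    (x : ℤ_[p]) (n : ℕ) :
    ∃ L : ℤ_[p],
      Filter.Tendsto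
        (fun N : ℕ =>
          ∑ y ∈ Finset.range (p ^ N),
            (-1 : ℤ_[p]) ^ y * q ^ y * (x + (y : ℤ_[p])) ^ n)
        Filter.atTop (nhds L) := by
  have hqd : (p : ℤ_[p]) ∣ q - 1 := (PadicInt.norm_lt_one_iff_dvd _).mp hq
  set S : ℕ → ℤ_[p] := fun N =>
    ∑ y ∈ Finset.range (p ^ N),
      (-1 : ℤ_[p]) ^ y * q ^ y * (x + (y : ℤ_[p])) ^ n with hS
  set d : ℕ → ℤ_[p] := fun N => S (N + 1) - S N with hd
  -- divisibility of increments
  have hdvd : ∀ N, (p : ℤ_[p]) ^ N ∣ d N := by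
    intro N
    have hsplit : S (N + 1)
        = ∑ j ∈ Finset.range p, ∑ i ∈ Finset.range (p ^ N),
            (-1 : ℤ_[p]) ^ (j * p ^ N + i) * q ^ (j * p ^ N + i)
              * (x + ((j * p ^ N + i : ℕ) : ℤ_[p])) ^ n := by
      simp only [hS]
      rw [show p ^ (N + 1) = p * p ^ N from by ring]
      exact sum_range_mul' _ p (p ^ N)
    have hsign : ∀ j i : ℕ, ((-1 : ℤ_[p])) ^ (j * p ^ N + i)
        = (-1 : ℤ_[p]) ^ j * (-1 : ℤ_[p]) ^ i := by
      intro j i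
      have h1 : ((-1 : ℤ_[p])) ^ (p ^ N) = -1 := (hpodd.pow).neg_one_pow
      rw [pow_add, mul_comm j, pow_mul, h1]
    have hgs : (∑ j ∈ Finset.range p, ((-1 : ℤ_[p])) ^ j) = 1 := by
      rw [neg_one_geom_sum, if_neg (by simpa using hpodd)]
    have hrw : d N = ∑ j ∈ Finset.range p, (-1 : ℤ_[p]) ^ j *
        (∑ i ∈ Finset.range (p ^ N),
          (-1 : ℤ_[p]) ^ i *
            (q ^ (j * p ^ N + i) * (x + ((j * p ^ N + i : ℕ) : ℤ_[p])) ^ n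
              - q ^ i * (x + (i : ℤ_[p])) ^ n)) := by
      simp only [hd]
      rw [hsplit]
      simp only [mul_sub, Finset.mul_sum, Finset.sum_sub_distrib]
      congr 1
      · refine Finset.sum_congr rfl fun j _ => Finset.sum_congr rfl fun i _ => ?_
        rw [hsign]
        ring
      · rw [← Finset.sum_mul_sum, hgs, one_mul]
        simp only [hS]
        refine Finset.sum_congr rfl fun i _ => ?_
        ring
    rw [hrw]
    refine Finset.dvd_sum fun j _ => ?_
    refine Dvd.dvd.mul_left ?_ _
    refine Finset.dvd_sum fun i _ => ?_
    exact Dvd.dvd.mul_left (key2 q hqd x n N j i) _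
  -- norm bound
  have hnorm : ∀ N, ‖d N‖ ≤ ((p : ℝ)⁻¹) ^ N := by
    intro N
    obtain ⟨c, hc⟩ := hdvd N
    calc ‖d N‖ = ‖(p : ℤ_[p]) ^ N‖ * ‖c‖ := by rw [hc, norm_mul]
    _ ≤ ‖(p : ℤ_[p]) ^ N‖ * 1 := by
        exact mul_le_mul_of_nonneg_left (PadicInt.norm_le_one c) (norm_nonneg _)
    _ = ((p : ℝ)⁻¹) ^ N := by
        rw [mul_one, PadicInt.norm_p_pow, zpow_neg, zpow_natCast, inv_pow]
  have hp1 : (1 : ℝ) < (p : ℝ) := by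
    exact_mod_cast (Fact.out : p.Prime).one_lt
  have hsum : Summable d := by
    refine Summable.of_norm_bounded (summable_geometric_of_lt_one ?_ ?_) hnorm
    · positivity
    · rw [inv_lt_one_iff₀]; right; exact hp1
  obtain ⟨L0, hL0⟩ := hsum
  refine ⟨L0 + S 0, ?_⟩
  have htel : ∀ N, ∑ k ∈ Finset.range N, d k = S N - S 0 := fun N =>
    Finset.sum_range_sub S N
  have h1 : Filter.Tendsto (fun N => ∑ k ∈ Finset.range N, d k)
      Filter.atTop (nhds L0) := hL0.tendsto_sum_nat
  have h2 : Filter.Tendsto (fun N => S N - S 0 + S 0) Filter.atTop (nhds (L0 + S 0)) := by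
    refine Filter.Tendsto.add_const _ ?_
    simpa only [htel] using h1
  simpa using h2
end

section
/- Let p be an odd prime, r a positive integer, a_1,…,a_r and b_1,…,b_r positive integers, q a p-adic integer with |q − 1|_p < 1, and n a natural number. Then the sequence N ↦ Σ_{x_1=0}^{p^N − 1} ⋯ Σ_{x_r=0}^{p^N − 1} (-1)^{x_1+⋯+x_r} q^{b_1 x_1+⋯+b_r x_r} (a_1 x_1+⋯+a_r x_r)^n converges in ℤ_p as N → ∞; i.e., there exists L ∈ ℤ_p such that these multiple partial sums tend to L (this limit is the multivariate p-adic fermionic q-integral defining the multivariate q-Euler number E_{n,q}^{(r)}(a_1,…,a_r; b_1,…,b_r)). -/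
open Finset

section Aux

variable {p : ℕ} [hp : Fact p.Prime]

private lemma padic_norm_le_of_dvd {x y : ℤ_[p]} (h : x ∣ y) : ‖y‖ ≤ ‖x‖ := by
  obtain ⟨c, rfl⟩ := h
  rw [norm_mul]
  calc ‖x‖ * ‖c‖ ≤ ‖x‖ * 1 :=
        mul_le_mul_of_nonneg_left (PadicInt.norm_le_one c) (norm_nonneg x)
    _ = ‖x‖ := mul_one _

private lemma pow_sub_one_norm (u : ℤ_[p]) (m : ℕ) : ‖u ^ m - 1‖ ≤ ‖u - 1‖ := by
  have h := sub_dvd_pow_sub_pow u 1 m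
  rw [one_pow] at h
  exact padic_norm_le_of_dvd h

private lemma pinv_le_one : ((p : ℝ))⁻¹ ≤ 1 := by
  have : (1 : ℝ) ≤ p := by exact_mod_cast hp.out.one_lt.le
  rw [inv_le_one₀ (by positivity)]
  exact this

omit hp in
private lemma pinv_nonneg : (0 : ℝ) ≤ ((p : ℝ))⁻¹ := by positivity

private lemma q_pow_pow_norm (q : ℤ_[p]) (hq : ‖q - 1‖ < 1) (N : ℕ) :
    ‖q ^ p ^ N - 1‖ ≤ ((p : ℝ))⁻¹ ^ (N + 1) := by
  induction N with
  | zero =>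
    simp only [pow_zero, pow_one, zero_add]
    rw [PadicInt.norm_lt_one_iff_dvd] at hq
    obtain ⟨c, hc⟩ := hq
    rw [hc, norm_mul, PadicInt.norm_p]
    calc ((p:ℝ))⁻¹ * ‖c‖ ≤ ((p:ℝ))⁻¹ * 1 :=
          mul_le_mul_of_nonneg_left (PadicInt.norm_le_one c) pinv_nonneg
      _ = ((p:ℝ))⁻¹ := mul_one _
  | succ N ih =>
    have key : q ^ p ^ (N + 1) - 1
        = (∑ i ∈ Finset.range p, (q ^ p ^ N) ^ i) * (q ^ p ^ N - 1) := by
      rw [geom_sum_mul, ← pow_mul, ← pow_succ]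
    rw [key, norm_mul]
    have h1 : ‖∑ i ∈ Finset.range p, (q ^ p ^ N) ^ i‖ ≤ (p : ℝ)⁻¹ := by
      have hsplit : ∑ i ∈ Finset.range p, (q ^ p ^ N) ^ i
          = (∑ i ∈ Finset.range p, ((q ^ p ^ N) ^ i - 1)) + (p : ℤ_[p]) := by
        rw [Finset.sum_sub_distrib]
        simp
      rw [hsplit]
      refine (IsUltrametricDist.norm_add_le_max _ _).trans (max_le ?_ ?_)
      · refine IsUltrametricDist.norm_sum_le_of_forall_le_of_nonneg pinv_nonneg ?_
        intro i _
        refine (pow_sub_one_norm _ i).trans (ih.trans ?_)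
        calc ((p:ℝ))⁻¹ ^ (N + 1) ≤ ((p:ℝ))⁻¹ ^ 1 :=
              pow_le_pow_of_le_one pinv_nonneg pinv_le_one (by omega)
          _ = ((p:ℝ))⁻¹ := pow_one _
      · rw [PadicInt.norm_p]
    calc ‖∑ i ∈ Finset.range p, (q ^ p ^ N) ^ i‖ * ‖q ^ p ^ N - 1‖
        ≤ (p : ℝ)⁻¹ * ((p : ℝ))⁻¹ ^ (N + 1) :=
          mul_le_mul h1 ih (norm_nonneg _) pinv_nonneg
      _ = ((p : ℝ))⁻¹ ^ (N + 1 + 1) := by ring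

private lemma term_estimate (q : ℤ_[p]) (hq : ‖q - 1‖ < 1) (n N A B A' B' : ℕ) :
    ‖q ^ (B + p ^ N * B') * ((A + p ^ N * A' : ℕ) : ℤ_[p]) ^ n
      - q ^ B * ((A : ℕ) : ℤ_[p]) ^ n‖ ≤ ((p : ℝ))⁻¹ ^ N := by
  set X : ℤ_[p] := ((A + p ^ N * A' : ℕ) : ℤ_[p]) with hX
  set Y : ℤ_[p] := ((A : ℕ) : ℤ_[p]) with hY
  have hx : ‖X ^ n - Y ^ n‖ ≤ ((p : ℝ))⁻¹ ^ N := by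
    refine (padic_norm_le_of_dvd (sub_dvd_pow_sub_pow X Y n)).trans ?_
    have hXY : X - Y = (p : ℤ_[p]) ^ N * ((A' : ℕ) : ℤ_[p]) := by
      rw [hX, hY]; push_cast; ring
    rw [hXY, norm_mul, norm_pow, PadicInt.norm_p]
    calc ((p:ℝ))⁻¹ ^ N * ‖((A' : ℕ) : ℤ_[p])‖ ≤ ((p:ℝ))⁻¹ ^ N * 1 :=
          mul_le_mul_of_nonneg_left (PadicInt.norm_le_one _) (by positivity)
      _ = ((p:ℝ))⁻¹ ^ N := mul_one _
  have hy : ‖q ^ (p ^ N * B') - 1‖ ≤ ((p : ℝ))⁻¹ ^ N := by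
    have h1 := pow_sub_one_norm (u := q ^ p ^ N) B'
    rw [← pow_mul] at h1
    refine h1.trans ((q_pow_pow_norm q hq N).trans ?_)
    exact pow_le_pow_of_le_one pinv_nonneg pinv_le_one (by omega)
  have expand : q ^ (B + p ^ N * B') * X ^ n - q ^ B * Y ^ n
      = q ^ B * ((q ^ (p ^ N * B') - 1) * X ^ n + (X ^ n - Y ^ n)) := by
    rw [pow_add]; ring
  rw [expand, norm_mul]
  have hmax : ‖(q ^ (p ^ N * B') - 1) * X ^ n + (X ^ n - Y ^ n)‖ ≤ ((p : ℝ))⁻¹ ^ N := by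
    refine (IsUltrametricDist.norm_add_le_max _ _).trans (max_le ?_ hx)
    rw [norm_mul]
    calc ‖q ^ (p ^ N * B') - 1‖ * ‖X ^ n‖ ≤ ((p:ℝ))⁻¹ ^ N * 1 :=
          mul_le_mul hy (PadicInt.norm_le_one _) (norm_nonneg _) (by positivity)
      _ = ((p:ℝ))⁻¹ ^ N := mul_one _
  calc ‖q ^ B‖ * ‖(q ^ (p ^ N * B') - 1) * X ^ n + (X ^ n - Y ^ n)‖
      ≤ 1 * (((p:ℝ))⁻¹ ^ N) :=
        mul_le_mul (PadicInt.norm_le_one _) hmax (norm_nonneg _) zero_le_one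
    _ = ((p:ℝ))⁻¹ ^ N := one_mul _

private lemma sign_sum_one (r : ℕ) (hpodd : Odd p) :
    ∑ t : Fin r → Fin p, ((-1 : ℤ_[p])) ^ (∑ j, (t j : ℕ)) = 1 := by
  have h1 : ∀ t : Fin r → Fin p,
      ((-1 : ℤ_[p])) ^ (∑ j, (t j : ℕ)) = ∏ j, ((-1 : ℤ_[p])) ^ (t j : ℕ) := by
    intro t; rw [Finset.prod_pow_eq_pow_sum]
  simp only [h1]
  rw [← Fintype.piFinset_univ,
    ← Finset.prod_univ_sum (fun _ : Fin r => (univ : Finset (Fin p)))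
      (fun _ x => ((-1 : ℤ_[p])) ^ (x : ℕ))]
  have h2 : ∑ x : Fin p, ((-1 : ℤ_[p])) ^ (x : ℕ) = 1 := by
    rw [Fin.sum_univ_eq_sum_range (fun i => ((-1 : ℤ_[p])) ^ i), neg_one_geom_sum,
      if_neg (Nat.not_even_iff_odd.mpr hpodd)]
  simp [h2]

end Aux

/-- Let `p` be an odd prime, `r` a positive integer, `a_j, b_j` positive
integers, `q ∈ ℤ_p` with `|q - 1|_p < 1` and `n ∈ ℕ`. Then the multiple partial sums
`N ↦ Σ_{x_1,…,x_r=0}^{p^N - 1} (-1)^{Σ x_j} q^{Σ b_j x_j} (Σ a_j x_j)^n` converge in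
`ℤ_p`; the limit is the multivariate fermionic `p`-adic `q`-integral defining
`E_{n,q}^{(r)}(a_1,…,a_r; b_1,…,b_r)`. -/
theorem changhee_multivariate_fermionic_integral_exists
    (p : ℕ) [Fact p.Prime] (hpodd : Odd p)
    (r : ℕ) (hr : 0 < r) (a b : Fin r → ℕ)
    (ha : ∀ j, 0 < a j) (hb : ∀ j, 0 < b j)
    (q : ℤ_[p]) (hq : ‖q - 1‖ < 1) (n : ℕ) :
    ∃ L : ℤ_[p],
      Filter.Tendsto
        (fun N : ℕ =>
          ∑ v : Fin r → Fin (p ^ N),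
            (-1 : ℤ_[p]) ^ (∑ j, (v j : ℕ)) * q ^ (∑ j, b j * (v j : ℕ)) *
              ((∑ j, a j * (v j : ℕ) : ℕ) : ℤ_[p]) ^ n)
        Filter.atTop (nhds L) := by
  classical
  set f : ℕ → ℤ_[p] := fun N => ∑ v : Fin r → Fin (p ^ N),
      (-1 : ℤ_[p]) ^ (∑ j, (v j : ℕ)) * q ^ (∑ j, b j * (v j : ℕ)) *
        ((∑ j, a j * (v j : ℕ) : ℕ) : ℤ_[p]) ^ n with hfdef
  have hrlt : ((p : ℝ))⁻¹ < 1 := by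
    rw [inv_lt_one₀ (by exact_mod_cast (Fact.out : p.Prime).pos)]
    exact_mod_cast (Fact.out : p.Prime).one_lt
  have hbound : ∀ N, dist (f N) (f (N + 1)) ≤ 1 * ((p : ℝ))⁻¹ ^ N := by
    intro N
    rw [dist_eq_norm', one_mul]
    -- reindexing equivalence
    let e : Fin p × Fin (p ^ N) ≃ Fin (p ^ (N + 1)) :=
      finProdFinEquiv.trans (finCongr (pow_succ' p N).symm)
    have he : ∀ (t : Fin p) (i : Fin (p ^ N)),
        ((e (t, i) : ℕ)) = (i : ℕ) + p ^ N * (t : ℕ) := by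
      intro t i
      simp [e, finProdFinEquiv]
    let E : ((Fin r → Fin p) × (Fin r → Fin (p ^ N))) ≃ (Fin r → Fin (p ^ (N + 1))) :=
      (Equiv.arrowProdEquivProdArrow _ _ _).symm.trans
        (Equiv.arrowCongr (Equiv.refl _) e)
    have hE : ∀ (ti : (Fin r → Fin p) × (Fin r → Fin (p ^ N))) (j : Fin r),
        ((E ti j : ℕ)) = (ti.2 j : ℕ) + p ^ N * (ti.1 j : ℕ) := by
      intro ti j
      simp [E, Equiv.arrowProdEquivProdArrow, he]
    have hsum : f (N + 1) = ∑ t : Fin r → Fin p, ∑ i : Fin r → Fin (p ^ N),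
        (-1 : ℤ_[p]) ^ (∑ j, ((i j : ℕ) + p ^ N * (t j : ℕ))) *
          q ^ (∑ j, b j * ((i j : ℕ) + p ^ N * (t j : ℕ))) *
          ((∑ j, a j * ((i j : ℕ) + p ^ N * (t j : ℕ)) : ℕ) : ℤ_[p]) ^ n := by
      have h0 : f (N + 1) = ∑ ti : (Fin r → Fin p) × (Fin r → Fin (p ^ N)),
          (-1 : ℤ_[p]) ^ (∑ j, ((ti.2 j : ℕ) + p ^ N * (ti.1 j : ℕ))) *
            q ^ (∑ j, b j * ((ti.2 j : ℕ) + p ^ N * (ti.1 j : ℕ))) *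
            ((∑ j, a j * ((ti.2 j : ℕ) + p ^ N * (ti.1 j : ℕ)) : ℕ) : ℤ_[p]) ^ n :=
        (Fintype.sum_equiv E _ _ (fun ti => by simp only [hE])).symm
      rw [h0]
      exact Fintype.sum_prod_type _
    -- rewrite the inner summand
    have hT : ∀ (t : Fin r → Fin p) (i : Fin r → Fin (p ^ N)),
        (-1 : ℤ_[p]) ^ (∑ j, ((i j : ℕ) + p ^ N * (t j : ℕ))) *
          q ^ (∑ j, b j * ((i j : ℕ) + p ^ N * (t j : ℕ))) *
          ((∑ j, a j * ((i j : ℕ) + p ^ N * (t j : ℕ)) : ℕ) : ℤ_[p]) ^ n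
        = (-1 : ℤ_[p]) ^ (∑ j, (t j : ℕ)) *
            ((-1 : ℤ_[p]) ^ (∑ j, (i j : ℕ)) *
              (q ^ ((∑ j, b j * (i j : ℕ)) + p ^ N * ∑ j, b j * (t j : ℕ)) *
                ((((∑ j, a j * (i j : ℕ)) + p ^ N * ∑ j, a j * (t j : ℕ) : ℕ)) : ℤ_[p]) ^ n)) := by
      intro t i
      have e1 : ∑ j, ((i j : ℕ) + p ^ N * (t j : ℕ))
          = (∑ j, (i j : ℕ)) + p ^ N * ∑ j, (t j : ℕ) := by
        rw [Finset.sum_add_distrib, Finset.mul_sum]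
      have e2 : ∑ j, b j * ((i j : ℕ) + p ^ N * (t j : ℕ))
          = (∑ j, b j * (i j : ℕ)) + p ^ N * ∑ j, b j * (t j : ℕ) := by
        rw [Finset.mul_sum, ← Finset.sum_add_distrib]
        exact Finset.sum_congr rfl fun j _ => by ring
      have e3 : ∑ j, a j * ((i j : ℕ) + p ^ N * (t j : ℕ))
          = (∑ j, a j * (i j : ℕ)) + p ^ N * ∑ j, a j * (t j : ℕ) := by
        rw [Finset.mul_sum, ← Finset.sum_add_distrib]
        exact Finset.sum_congr rfl fun j _ => by ring
      rw [e1, e2, e3, pow_add, pow_mul, (hpodd.pow).neg_one_pow]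
      ring
    -- rewrite f N as a double sum using the sign sum
    have hfN : f N = ∑ t : Fin r → Fin p, ∑ i : Fin r → Fin (p ^ N),
        (-1 : ℤ_[p]) ^ (∑ j, (t j : ℕ)) *
          ((-1 : ℤ_[p]) ^ (∑ j, (i j : ℕ)) *
            (q ^ (∑ j, b j * (i j : ℕ)) *
              ((∑ j, a j * (i j : ℕ) : ℕ) : ℤ_[p]) ^ n)) := by
      have : ∀ t : Fin r → Fin p,
          ∑ i : Fin r → Fin (p ^ N),
            (-1 : ℤ_[p]) ^ (∑ j, (t j : ℕ)) *
              ((-1 : ℤ_[p]) ^ (∑ j, (i j : ℕ)) *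
                (q ^ (∑ j, b j * (i j : ℕ)) *
                  ((∑ j, a j * (i j : ℕ) : ℕ) : ℤ_[p]) ^ n))
          = (-1 : ℤ_[p]) ^ (∑ j, (t j : ℕ)) * f N := by
        intro t
        rw [← Finset.mul_sum, hfdef]
        congr 1
        exact Finset.sum_congr rfl fun i _ => by ring
      simp only [this]
      rw [← Finset.sum_mul, sign_sum_one r hpodd, one_mul]
    rw [hsum, hfN, ← Finset.sum_sub_distrib]
    refine IsUltrametricDist.norm_sum_le_of_forall_le_of_nonneg (by positivity) ?_
    intro t _
    rw [← Finset.sum_sub_distrib]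
    refine IsUltrametricDist.norm_sum_le_of_forall_le_of_nonneg (by positivity) ?_
    intro i _
    rw [hT t i, ← mul_sub, norm_mul, ← mul_sub, norm_mul,
      norm_pow, norm_neg, norm_one, one_pow, one_mul,
      norm_pow, norm_neg, norm_one, one_pow, one_mul]
    exact term_estimate q hq n N _ _ _ _
  exact cauchySeq_tendsto_of_complete
    (cauchySeq_of_le_geometric ((p : ℝ))⁻¹ 1 hrlt hbound)
end
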